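/- Fix integers n ≥ 2 and g ≥ 2. Consider all n-tuples of integers 0 < u₁ < u₂ < ⋯ < u_n such that u_{n−1} + u_n < 2n+1. Then the sum over all such tuples U of (4·(2n+1)^n / Φ_{2n+1}(U))^{g−1} equals 2^{2g−1}. -/

import Mathlib

/-- The function `f_k(r) = 4 sin²(rπ/k)`. -/
noncomputable def f (k : ℕ) (r : ℝ) : ℝ := 4 * Real.sin (r * Real.pi / k) ^ 2

/-- `Φ_k(U) = ∏_{1 ≤ i < j ≤ n} f_k(u_i - u_j) f_k(u_i + u_j) · ∏_i f_k(u_i)`. -/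
noncomputable def Phi (k n : ℕ) (u : Fin n → ℤ) : ℝ :=
  (∏ i : Fin n, ∏ j ∈ Finset.univ.filter (fun j => i < j),
    f k ((u i : ℝ) - (u j : ℝ)) * f k ((u i : ℝ) + (u j : ℝ))) *
  ∏ i : Fin n, f k ((u i : ℝ))

/-! ### Auxiliary lemmas -/

lemma f_neg (k : ℕ) (x : ℝ) : f k (-x) = f k x := by
  simp [f, neg_mul, neg_div]

lemma f_reflect (k : ℕ) (hk : k ≠ 0) (x : ℝ) : f k ((k : ℝ) - x) = f k x := by
  have hk' : (k:ℝ) ≠ 0 := Nat.cast_ne_zero.mpr hk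
  have h : ((k:ℝ) - x) * Real.pi / k = Real.pi - x * Real.pi / k := by field_simp
  rw [f, h, Real.sin_pi_sub]; rfl

lemma f_nonneg (k : ℕ) (x : ℝ) : 0 ≤ f k x := by unfold f; positivity

lemma normSq_one_sub_exp (k : ℕ) (hk : k ≠ 0) (m : ℕ) :
    Complex.normSq (1 - Complex.exp (2 * Real.pi * Complex.I / k) ^ m) = f k m := by
  have hk' : (k:ℝ) ≠ 0 := Nat.cast_ne_zero.mpr hk
  have h1 : (m:ℂ) * (2 * Real.pi * Complex.I / k)
      = ((2 * Real.pi * m / k : ℝ) : ℂ) * Complex.I := by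
    push_cast; field_simp
  rw [← Complex.exp_nat_mul, h1, Complex.exp_mul_I]
  set θ : ℝ := 2 * Real.pi * m / k with hθ
  have hre : (1 - (Complex.cos θ + Complex.sin θ * Complex.I)).re = 1 - Real.cos θ := by
    simp [Complex.cos_ofReal_re]
  have him : (1 - (Complex.cos θ + Complex.sin θ * Complex.I)).im = - Real.sin θ := by
    simp [Complex.sin_ofReal_re]
  rw [Complex.normSq_apply, hre, him]
  have hd : θ = 2 * ((m:ℝ) * Real.pi / k) := by rw [hθ]; ring
  have hcos : Real.cos θ = 1 - 2 * Real.sin ((m:ℝ) * Real.pi / k)^2 := by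
    rw [hd, Real.cos_two_mul']
    nlinarith [Real.sin_sq_add_cos_sq ((m:ℝ) * Real.pi / k)]
  have hs := Real.sin_sq_add_cos_sq θ
  unfold f
  nlinarith [hs, hcos]

lemma prod_f (n : ℕ) (hn : 0 < n) :
    ∏ r ∈ Finset.range n, f (2*n+1) ((r:ℝ)+1) = 2*n+1 := by
  set K := 2*n+1 with hK
  have hK0 : K ≠ 0 := by omega
  have hprim : IsPrimitiveRoot (Complex.exp (2 * Real.pi * Complex.I / K)) K :=
    Complex.isPrimitiveRoot_exp K hK0
  have key : ∏ r ∈ Finset.range (2*n),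
      (1 - Complex.exp (2 * Real.pi * Complex.I / K) ^ (r+1)) = ((2*n : ℕ) : ℂ) + 1 :=
    hprim.prod_one_sub_pow_eq_order
  set g : ℕ → ℝ := fun r => ‖(1 - Complex.exp (2 * Real.pi * Complex.I / K) ^ (r+1))‖
    with hgdef
  have habs : ∏ r ∈ Finset.range (2*n), g r = K := by
    have := congrArg (‖·‖) key
    rw [norm_prod] at this
    rw [hgdef]
    have h2 : ((2*n : ℕ) : ℂ) + 1 = ((K : ℕ) : ℂ) := by rw [hK]; push_cast; ring
    rw [this, h2, Complex.norm_natCast]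
  have hg2 : ∀ r : ℕ, g r ^ 2 = f K ((r:ℝ)+1) := by
    intro r
    rw [hgdef]
    simp only [Complex.sq_norm]
    have := normSq_one_sub_exp K hK0 (r+1)
    rw [this]; push_cast; ring_nf
  have hg : ∀ r : ℕ, g r = Real.sqrt (f K ((r:ℝ)+1)) := by
    intro r
    rw [← hg2 r, Real.sqrt_sq (by positivity)]
  have hsym : ∀ r < n, g (n + r) = g (n - 1 - r) := by
    intro r hr
    rw [hg, hg]
    congr 1
    have hcast : ((n - 1 - r : ℕ) : ℝ) = (n : ℝ) - 1 - r := by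
      have : (n - 1 - r : ℕ) = n - (r+1) := by omega
      rw [this, Nat.cast_sub (by omega)]; push_cast; ring
    rw [hcast]
    have h1 : ((n + r : ℕ) : ℝ) + 1 = (K : ℝ) - ((n : ℝ) - r) := by
      rw [hK]; push_cast; ring
    have h2 : (n : ℝ) - 1 - r + 1 = (n:ℝ) - r := by ring
    rw [h1, h2, f_reflect K hK0]
  calc ∏ r ∈ Finset.range n, f K ((r:ℝ)+1)
      = ∏ r ∈ Finset.range n, g r ^ 2 := by
        refine Finset.prod_congr rfl fun r _ => (hg2 r).symm
    _ = (∏ r ∈ Finset.range n, g r) * ∏ r ∈ Finset.range n, g r := by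
        rw [← Finset.prod_mul_distrib]; refine Finset.prod_congr rfl fun r _ => (sq (g r))
    _ = (∏ r ∈ Finset.range n, g r) * ∏ r ∈ Finset.range n, g (n + r) := by
        congr 1
        rw [← Finset.prod_range_reflect g n]
        exact Finset.prod_congr rfl fun r hr => ((hsym r (Finset.mem_range.mp hr))).symm
    _ = ∏ r ∈ Finset.range (2*n), g r := by
        rw [two_mul, Finset.prod_range_add]
    _ = (K:ℝ) := habs
    _ = 2*n+1 := by rw [hK]; push_cast; ring

lemma grid (n : ℕ) (hn : 0 < n) :
    ∏ j ∈ Finset.range n, ∏ r ∈ Finset.range (2*j+1), f (2*n+1) ((r:ℝ)+1)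
      = (2*(n:ℝ)+1)^n := by
  set K := 2*n+1 with hK
  have hK0 : K ≠ 0 := by omega
  have refl : ∀ m : ℕ, m ≤ 2*n - 1 → f K ((2*n-1-m : ℕ) + 1 : ℝ) = f K ((m:ℝ)+1) := by
    intro m hm
    have hc : ((2*n-1-m : ℕ) : ℝ) = 2*(n:ℝ) - 1 - m := by
      rw [Nat.cast_sub hm, Nat.cast_sub (by omega)]; push_cast; ring
    have h1 : ((2*n-1-m : ℕ) : ℝ) + 1 = (K:ℝ) - ((m:ℝ)+1) := by
      rw [hc, hK]; push_cast; ring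
    rw [h1, f_reflect K hK0]
  have lhs_eq : ∏ j ∈ Finset.range n, ∏ r ∈ Finset.range (2*j+1), f K ((r:ℝ)+1)
      = ∏ p ∈ (Finset.range n).sigma (fun j => Finset.range (2*j+1)), f K ((p.2:ℝ)+1) :=
    Finset.prod_sigma' _ _ _
  have rhs_eq : ∏ p ∈ (Finset.range n).sigma (fun _ => Finset.range n), f K ((p.2:ℝ)+1)
      = (2*(n:ℝ)+1)^n := by
    rw [← Finset.prod_sigma' (Finset.range n) (fun _ => Finset.range n)
      (fun _ r => f K ((r:ℝ)+1))]
    rw [Finset.prod_congr rfl (fun j _ => prod_f n hn), Finset.prod_const, Finset.card_range]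
  rw [lhs_eq, ← rhs_eq]
  refine Finset.prod_nbij'
    (fun p => if p.2 < n then p else ⟨n - 1 - p.1, 2*n - 1 - p.2⟩)
    (fun q => if q.2 < 2*q.1+1 then q else ⟨n - 1 - q.1, 2*n - 1 - q.2⟩)
    ?_ ?_ ?_ ?_ ?_
  · rintro ⟨a, b⟩ hp
    simp only [Finset.mem_sigma, Finset.mem_range] at hp ⊢
    split <;> simp_all <;> omega
  · rintro ⟨a, b⟩ hq
    simp only [Finset.mem_sigma, Finset.mem_range] at hq ⊢
    split <;> simp_all <;> omega
  · rintro ⟨a, b⟩ hp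
    simp only [Finset.mem_sigma, Finset.mem_range] at hp
    by_cases h : b < n <;> simp only [h, if_pos, if_neg, ite_true, ite_false] <;>
      [skip; skip] <;> split <;> simp_all <;> (try congr 1) <;> omega
  · rintro ⟨a, b⟩ hq
    simp only [Finset.mem_sigma, Finset.mem_range] at hq
    by_cases h : b < 2*a+1 <;> simp only [h, ite_true, ite_false] <;> split <;>
      simp_all <;> (try congr 1) <;> omega
  · rintro ⟨a, b⟩ hp
    simp only [Finset.mem_sigma, Finset.mem_range] at hp
    by_cases h : b < n
    · simp [h]
    · simp only [h, ite_false]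
      exact (refl b (by omega)).symm

lemma fin_filter_prod {n : ℕ} (j : Fin n) (G : ℕ → ℝ) :
    ∏ i ∈ Finset.univ.filter (fun i : Fin n => i < j), G i.1
      = ∏ m ∈ Finset.range j.1, G m := by
  refine Finset.prod_bij' (fun i _ => i.1)
    (fun m hm => ⟨m, lt_trans (Finset.mem_range.mp hm) j.isLt⟩) ?_ ?_ ?_ ?_ ?_
  · intro a ha
    simp only [Finset.mem_filter, Finset.mem_univ, true_and, Fin.lt_def] at ha
    simpa using ha
  · intro a ha
    simp only [Finset.mem_range] at ha
    exact Finset.mem_filter.mpr ⟨Finset.mem_univ _, ha⟩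
  · intro a ha; rfl
  · intro a ha; rfl
  · intro a ha; rfl

lemma row_general (k J : ℕ) :
    (∏ m ∈ Finset.range J, (f k (((m:ℝ)+1) - ((J:ℝ)+1)) * f k (((m:ℝ)+1) + ((J:ℝ)+1))))
      * f k ((J:ℝ)+1) = ∏ r ∈ Finset.range (2*J+1), f k ((r:ℝ)+1) := by
  rw [Finset.prod_mul_distrib]
  have h2 : 2*J+1 = (J+1) + J := by omega
  rw [h2, Finset.prod_range_add, Finset.prod_range_succ]
  have e1 : ∏ m ∈ Finset.range J, f k (((m:ℝ)+1) - ((J:ℝ)+1))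
      = ∏ r ∈ Finset.range J, f k ((r:ℝ)+1) := by
    rw [← Finset.prod_range_reflect (fun r => f k ((r:ℝ)+1)) J]
    refine Finset.prod_congr rfl fun m hm => ?_
    rw [Finset.mem_range] at hm
    have hc : ((J-1-m : ℕ):ℝ) = (J:ℝ) - 1 - m := by
      rw [(by omega : J-1-m = J-(m+1)), Nat.cast_sub (by omega)]; push_cast; ring
    have hx : ((m:ℝ)+1) - ((J:ℝ)+1) = -(((J - 1 - m : ℕ):ℝ) + 1) := by rw [hc]; ring
    rw [hx, f_neg]
  have e2 : ∏ m ∈ Finset.range J, f k (((m:ℝ)+1) + ((J:ℝ)+1))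
      = ∏ m ∈ Finset.range J, f k (((J+1+m : ℕ):ℝ)+1) := by
    refine Finset.prod_congr rfl fun m hm => ?_
    congr 1; push_cast; ring
  rw [e1, e2]; ring

lemma prod_shift (n : ℕ) (hn : 1 ≤ n) :
    ∏ r ∈ Finset.range (2*n-1), f (2*n+1) ((r:ℝ)+2)
      = ∏ r ∈ Finset.range (2*n-1), f (2*n+1) ((r:ℝ)+1) := by
  obtain ⟨M, hM⟩ : ∃ M, 2*n-1 = M+1 := ⟨2*n-2, by omega⟩
  rw [hM, Finset.prod_range_succ, Finset.prod_range_succ']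
  have h1 : ((M:ℝ)+2) = ((2*n+1 : ℕ):ℝ) - 1 := by
    have : M = 2*n-2 := by omega
    rw [this, Nat.cast_sub (by omega)]; push_cast; ring
  have h2 : f (2*n+1) ((M:ℝ)+2) = f (2*n+1) 1 := by rw [h1, f_reflect _ (by omega)]
  rw [h2]
  congr 1
  · refine Finset.prod_congr rfl fun m hm => ?_; congr 1; push_cast; ring
  · norm_num

lemma row_last (n : ℕ) (hn : 2 ≤ n) :
    (∏ m ∈ Finset.range (n-1),
        (f (2*n+1) (((m:ℝ)+1) - ((n:ℝ)+1)) * f (2*n+1) (((m:ℝ)+1) + ((n:ℝ)+1))))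
      * f (2*n+1) ((n:ℝ)+1)
    = ∏ r ∈ Finset.range (2*(n-1)+1), f (2*n+1) ((r:ℝ)+1) := by
  have h21 : 2*(n-1)+1 = 2*n-1 := by omega
  rw [h21, ← prod_shift n (by omega)]
  rw [Finset.prod_mul_distrib]
  have hsplit : 2*n-1 = n + (n-1) := by omega
  rw [hsplit, Finset.prod_range_add]
  obtain ⟨N, hN⟩ : ∃ N, n = N+1 := ⟨n-1, by omega⟩
  have e1 : ∏ m ∈ Finset.range (n-1), f (2*n+1) (((m:ℝ)+1) - ((n:ℝ)+1))
      = ∏ r ∈ Finset.range (n-1), f (2*n+1) ((r:ℝ)+2) := by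
    rw [← Finset.prod_range_reflect (fun r => f (2*n+1) ((r:ℝ)+2)) (n-1)]
    refine Finset.prod_congr rfl fun m hm => ?_
    rw [Finset.mem_range] at hm
    have hc : ((n-1-1-m : ℕ):ℝ) = (n:ℝ) - 2 - m := by
      rw [(by omega : n-1-1-m = n-(m+2)), Nat.cast_sub (by omega)]; push_cast; ring
    have hx : ((m:ℝ)+1) - ((n:ℝ)+1) = -(((n-1-1-m : ℕ):ℝ) + 2) := by rw [hc]; ring
    rw [hx, f_neg]
  have e2 : ∏ r ∈ Finset.range n, f (2*n+1) ((r:ℝ)+2)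
      = (∏ r ∈ Finset.range (n-1), f (2*n+1) ((r:ℝ)+2)) * f (2*n+1) ((n:ℝ)+1) := by
    subst hN
    rw [Finset.prod_range_succ]
    simp only [Nat.add_sub_cancel]
    congr 2
    push_cast; ring
  have e3 : ∏ m ∈ Finset.range (n-1), f (2*n+1) (((m:ℝ)+1) + ((n:ℝ)+1))
      = ∏ m ∈ Finset.range (n-1), f (2*n+1) (((n+m : ℕ):ℝ)+2) := by
    refine Finset.prod_congr rfl fun m hm => ?_
    congr 1; push_cast; ring
  rw [e1, e2, e3]; ring

/-- The tuple `(1, 2, …, n)`. -/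
def Atup (n : ℕ) : Fin n → ℤ := fun i => i.1 + 1

/-- The tuple `(1, 2, …, n-1, n+1)`. -/
def Btup (n : ℕ) : Fin n → ℤ := fun i => if i.1 = n - 1 then (n : ℤ) + 1 else i.1 + 1

lemma Phi_rows (k n : ℕ) (u : Fin n → ℤ) :
    Phi k n u = ∏ j : Fin n,
      ((∏ i ∈ Finset.univ.filter (fun i : Fin n => i < j),
          f k ((u i : ℝ) - (u j : ℝ)) * f k ((u i : ℝ) + (u j : ℝ))) * f k ((u j : ℝ))) := by
  rw [Phi, Finset.prod_comm' (s := Finset.univ)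
    (t := fun i => Finset.univ.filter (fun j => i < j)) (t' := Finset.univ)
    (s' := fun j => Finset.univ.filter (fun i => i < j)) (by intro x y; simp [and_comm]),
    ← Finset.prod_mul_distrib]

lemma Phi_A (n : ℕ) (hn : 1 ≤ n) : Phi (2*n+1) n (Atup n) = (2*(n:ℝ)+1)^n := by
  rw [Phi_rows, ← grid n hn,
    ← Fin.prod_univ_eq_prod_range (fun J => ∏ r ∈ Finset.range (2*J+1), f (2*n+1) ((r:ℝ)+1)) n]
  refine Finset.prod_congr rfl fun j _ => ?_
  have hA : ∀ i : Fin n, ((Atup n i : ℤ) : ℝ) = (i.1:ℝ)+1 := fun i => by simp [Atup]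
  simp only [hA]
  rw [fin_filter_prod j
    (fun m => f (2*n+1) (((m:ℝ)+1) - ((j.1:ℝ)+1)) * f (2*n+1) (((m:ℝ)+1) + ((j.1:ℝ)+1)))]
  exact row_general (2*n+1) j.1

lemma Phi_B (n : ℕ) (hn : 2 ≤ n) : Phi (2*n+1) n (Btup n) = (2*(n:ℝ)+1)^n := by
  rw [Phi_rows, ← grid n (by omega),
    ← Fin.prod_univ_eq_prod_range (fun J => ∏ r ∈ Finset.range (2*J+1), f (2*n+1) ((r:ℝ)+1)) n]
  refine Finset.prod_congr rfl fun j _ => ?_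
  by_cases hj : j.1 = n-1
  · have hBj : ((Btup n j : ℤ):ℝ) = (n:ℝ)+1 := by simp [Btup, hj]
    have hstep : ∀ i : Fin n, i < j → ((Btup n i : ℤ):ℝ) = (i.1:ℝ)+1 := by
      intro i hi
      have hij : i.1 < j.1 := hi
      have : i.1 ≠ n-1 := by omega
      simp [Btup, this]
    have e : (∏ i ∈ Finset.univ.filter (fun i : Fin n => i < j),
          f (2*n+1) ((Btup n i : ℝ) - (Btup n j : ℝ)) * f (2*n+1) ((Btup n i : ℝ) + (Btup n j : ℝ)))
        = ∏ i ∈ Finset.univ.filter (fun i : Fin n => i < j),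
          f (2*n+1) (((i.1:ℝ)+1) - ((n:ℝ)+1)) * f (2*n+1) (((i.1:ℝ)+1) + ((n:ℝ)+1)) :=
      Finset.prod_congr rfl fun i hi => by
        rw [hstep i (Finset.mem_filter.mp hi).2, hBj]
    rw [e, hBj, fin_filter_prod j
      (fun m => f (2*n+1) (((m:ℝ)+1) - ((n:ℝ)+1)) * f (2*n+1) (((m:ℝ)+1) + ((n:ℝ)+1))), hj]
    exact row_last n hn
  · have hBj : ((Btup n j : ℤ):ℝ) = (j.1:ℝ)+1 := by simp [Btup, hj]
    have hstep : ∀ i : Fin n, i < j → ((Btup n i : ℤ):ℝ) = (i.1:ℝ)+1 := by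
      intro i hi
      have hij : i.1 < j.1 := hi
      have hjn : j.1 < n := j.isLt
      have : i.1 ≠ n-1 := by omega
      simp [Btup, this]
    have e : (∏ i ∈ Finset.univ.filter (fun i : Fin n => i < j),
          f (2*n+1) ((Btup n i : ℝ) - (Btup n j : ℝ)) * f (2*n+1) ((Btup n i : ℝ) + (Btup n j : ℝ)))
        = ∏ i ∈ Finset.univ.filter (fun i : Fin n => i < j),
          f (2*n+1) (((i.1:ℝ)+1) - ((j.1:ℝ)+1)) * f (2*n+1) (((i.1:ℝ)+1) + ((j.1:ℝ)+1)) :=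
      Finset.prod_congr rfl fun i hi => by
        rw [hstep i (Finset.mem_filter.mp hi).2, hBj]
    rw [e, hBj, fin_filter_prod j
      (fun m => f (2*n+1) (((m:ℝ)+1) - ((j.1:ℝ)+1)) * f (2*n+1) (((m:ℝ)+1) + ((j.1:ℝ)+1)))]
    exact row_general (2*n+1) j.1

lemma strictMono_step {n : ℕ} {u : Fin n → ℤ} (hu : StrictMono u) :
    ∀ d : ℕ, ∀ i j : Fin n, i.1 + d = j.1 → u i + d ≤ u j := by
  intro d
  induction d with
  | zero => intro i j h; have : i = j := Fin.ext (by omega); simp [this]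
  | succ d ih =>
    intro i j h
    have hj : i.1 + d < n := by have := j.isLt; omega
    have h1 := ih i ⟨i.1 + d, hj⟩ rfl
    have h2 : u ⟨i.1 + d, hj⟩ < u j := hu (by show i.1 + d < j.1; omega)
    push_cast
    push_cast at h1
    omega

lemma classify (n : ℕ) (hn : 2 ≤ n) (u : Fin n → ℤ)
    (h1 : StrictMono u) (h2 : 0 < u ⟨0, by omega⟩)
    (h3 : u ⟨n - 2, by omega⟩ + u ⟨n - 1, by omega⟩ < 2 * n + 1) :
    u = Atup n ∨ u = Btup n := by
  obtain ⟨i0, e0⟩ : ∃ i : Fin n, i.1 = 0 := ⟨⟨0, by omega⟩, rfl⟩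
  obtain ⟨i1, e1⟩ : ∃ i : Fin n, i.1 = n - 2 := ⟨⟨n - 2, by omega⟩, rfl⟩
  obtain ⟨i2, e2⟩ : ∃ i : Fin n, i.1 = n - 1 := ⟨⟨n - 1, by omega⟩, rfl⟩
  have h2' : 0 < u i0 := by
    rw [show i0 = ⟨0, by omega⟩ from Fin.ext (e0.trans rfl)]; exact h2
  have h3' : u i1 + u i2 < 2 * n + 1 := by
    rw [show i1 = ⟨n - 2, by omega⟩ from Fin.ext (e1.trans rfl),
      show i2 = ⟨n - 1, by omega⟩ from Fin.ext (e2.trans rfl)]; exact h3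
  have k01 := strictMono_step h1 (n-2) i0 i1 (by omega)
  have k12 := strictMono_step h1 1 i1 i2 (by omega)
  have hu1 : u i1 = (n : ℤ) - 1 := by push_cast at k12 k01 ⊢; omega
  have hmid : ∀ i : Fin n, i.1 ≤ n - 2 → u i = i.1 + 1 := by
    intro i hi
    have ka := strictMono_step h1 i.1 i0 i (by omega)
    have kb := strictMono_step h1 (n - 2 - i.1) i i1 (by omega)
    push_cast at ka kb ⊢
    omega
  have hu2 : u i2 = (n : ℤ) ∨ u i2 = (n : ℤ) + 1 := by omega
  rcases hu2 with h | h
  · left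
    funext i
    by_cases hi : i.1 ≤ n - 2
    · rw [hmid i hi]; simp [Atup]
    · have hieq : i = i2 := Fin.ext (by have := i.isLt; omega)
      rw [hieq, h]
      simp only [Atup, e2]
      omega
  · right
    funext i
    by_cases hi : i.1 ≤ n - 2
    · rw [hmid i hi]
      have hne : i.1 ≠ n - 1 := by omega
      simp [Btup, hne]
    · have hieq : i = i2 := Fin.ext (by have := i.isLt; omega)
      rw [hieq, h]
      simp [Btup, e2]

lemma Atup_mem (n : ℕ) (hn : 2 ≤ n) :
    StrictMono (Atup n) ∧ 0 < Atup n ⟨0, by omega⟩ ∧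
      Atup n ⟨n - 2, by omega⟩ + Atup n ⟨n - 1, by omega⟩ < 2 * n + 1 := by
  refine ⟨fun i j hij => ?_, ?_, ?_⟩
  · have : i.1 < j.1 := hij
    simp only [Atup]
    omega
  · simp [Atup]
  · simp only [Atup, Fin.val_mk]
    omega

lemma Btup_mem (n : ℕ) (hn : 2 ≤ n) :
    StrictMono (Btup n) ∧ 0 < Btup n ⟨0, by omega⟩ ∧
      Btup n ⟨n - 2, by omega⟩ + Btup n ⟨n - 1, by omega⟩ < 2 * n + 1 := by
  refine ⟨fun i j hij => ?_, ?_, ?_⟩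
  · have hij' : i.1 < j.1 := hij
    have hjn : j.1 < n := j.isLt
    have hi : i.1 ≠ n - 1 := by omega
    by_cases hj : j.1 = n - 1 <;> simp only [Btup, hi, hj, if_true, if_false, ite_true,
      ite_false, if_neg, reduceIte] <;> omega
  · have h0 : (0:ℕ) ≠ n - 1 := by omega
    simp [Btup, h0]
  · have ha : n - 2 ≠ n - 1 := by omega
    have hA : Btup n (⟨n - 2, by omega⟩ : Fin n) = ((n - 2 : ℕ) : ℤ) + 1 := if_neg ha
    have hB : Btup n (⟨n - 1, by omega⟩ : Fin n) = (n : ℤ) + 1 := if_pos rfl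
    rw [hA, hB]
    omega

lemma Atup_ne_Btup (n : ℕ) (hn : 2 ≤ n) : Atup n ≠ Btup n := by
  intro h
  obtain ⟨j, hj⟩ : ∃ j : Fin n, j.1 = n - 1 := ⟨⟨n - 1, by omega⟩, rfl⟩
  have hthis := congrFun h j
  have hB : Btup n j = (n : ℤ) + 1 := if_pos hj
  rw [hB] at hthis
  simp only [Atup] at hthis
  omega

/-- For `n ≥ 2` and `g ≥ 2`, the sum over all strictly increasing `n`-tuples of
integers `0 < u₁ < ⋯ < u_n` with `u_{n-1} + u_n < 2n+1`, of
`(4 (2n+1)^n / Φ_{2n+1}(U))^{g-1}`, equals `2^{2g-1}`.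
(This is the level-2 Verlinde number `N₂⁺(Spin_{2n+1})`.) -/
theorem verlinde_N2_plus_spin_odd (n g : ℕ) (hn : 2 ≤ n) (hg : 2 ≤ g) :
    ∑ᶠ (u : {u : Fin n → ℤ //
        StrictMono u ∧
        0 < u ⟨0, by omega⟩ ∧
        u ⟨n - 2, by omega⟩ + u ⟨n - 1, by omega⟩ < 2 * n + 1}),
      (4 * (2 * n + 1 : ℝ) ^ n / Phi (2 * n + 1) n u.1) ^ (g - 1)
    = 2 ^ (2 * g - 1) := by
  classical
  rw [finsum_subtype_eq_finsum_cond
    (f := fun v => (4 * (2 * (n:ℝ) + 1) ^ n / Phi (2 * n + 1) n v) ^ (g - 1))]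
  have hiff : ∀ v : Fin n → ℤ,
      (StrictMono v ∧ 0 < v ⟨0, by omega⟩ ∧
        v ⟨n - 2, by omega⟩ + v ⟨n - 1, by omega⟩ < 2 * n + 1)
      = (v ∈ ({Atup n, Btup n} : Set (Fin n → ℤ))) := by
    intro v
    apply propext
    constructor
    · rintro ⟨ha, hb, hc⟩
      rcases classify n hn v ha hb hc with h | h
      · exact Or.inl h
      · exact Or.inr h
    · intro h
      rcases h with h | h <;> subst h
      · exact Atup_mem n hn
      · exact Btup_mem n hn
  have hcong : ∑ᶠ (v : Fin n → ℤ) (_ : StrictMono v ∧ 0 < v ⟨0, by omega⟩ ∧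
        v ⟨n - 2, by omega⟩ + v ⟨n - 1, by omega⟩ < 2 * n + 1),
        (4 * (2 * n + 1 : ℝ) ^ n / Phi (2 * n + 1) n v) ^ (g - 1)
      = ∑ᶠ (v : Fin n → ℤ) (_ : v ∈ ({Atup n, Btup n} : Set (Fin n → ℤ))),
        (4 * (2 * n + 1 : ℝ) ^ n / Phi (2 * n + 1) n v) ^ (g - 1) :=
    finsum_congr fun v => by rw [hiff v]
  rw [hcong, finsum_mem_pair (Atup_ne_Btup n hn)]
  have hpos : (0:ℝ) < (2*(n:ℝ)+1)^n := by positivity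
  have hval : ∀ v : Fin n → ℤ, Phi (2*n+1) n v = (2*(n:ℝ)+1)^n →
      (4 * (2 * n + 1 : ℝ) ^ n / Phi (2 * n + 1) n v) ^ (g - 1) = 4 ^ (g-1) := by
    intro v hv
    rw [hv]
    have h4 : 4 * (2 * (n:ℝ) + 1) ^ n / (2*(n:ℝ)+1)^n = 4 := by
      rw [mul_div_assoc, div_self (ne_of_gt hpos), mul_one]
    rw [h4]
  rw [hval _ (Phi_A n (by omega)), hval _ (Phi_B n hn)]
  have h4 : (4:ℝ) = 2^2 := by norm_num
  rw [h4, ← pow_mul, show 2*g-1 = 2*(g-1)+1 by omega, pow_succ]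
  ring
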